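/- Let A be a C*-algebra, ι a type, and x : ι → A a family of self-adjoint elements (star (x i) = x i) satisfying: (1) x i * x j * x k = x k * x i * x j for pairwise distinct i, j, k; (2) x i * x i * x k = x k * x i * x i for i ≠ k; (3) x i * x j * x i = - (x i * x i * x j) for i ≠ j; (4) x i * x j * x j = - (x j * x i * x j) for i ≠ j. Then x i * x j = - (x j * x i) for all i ≠ j. -/

import Mathlib

/-- In a C*-algebra, self-adjoint elements satisfying the twisted 3-cycle relations
pairwise anticommute. -/
theorem twisted_three_cycle_collapses_to_twisted_sphere {A : Type*} [NormedRing A]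
    [StarRing A] [CStarRing A] {ι : Type*} (x : ι → A)
    (hsa : ∀ i : ι, star (x i) = x i)
    (h1 : ∀ i j k : ι, i ≠ j → j ≠ k → i ≠ k → x i * x j * x k = x k * x i * x j)
    (h2 : ∀ i k : ι, i ≠ k → x i * x i * x k = x k * x i * x i)
    (h3 : ∀ i j : ι, i ≠ j → x i * x j * x i = -(x i * x i * x j))
    (h4 : ∀ i j : ι, i ≠ j → x i * x j * x j = -(x j * x i * x j)) :
    ∀ i j : ι, i ≠ j → x i * x j = -(x j * x i) := by
  intro i j hij
  set a := x i with ha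
  set b := x j with hb
  have hij' : j ≠ i := hij.symm
  -- the anticommutator
  set c := a * b + b * a with hc
  have hcs : star c = c := by
    simp [hc, star_mul, show star a = a from hsa i, show star b = b from hsa j, add_comm]
  have H2 : a * a * b = b * (a * a) := by rw [h2 i j hij, mul_assoc]
  have H2' : b * b * a = a * (b * b) := by rw [h2 j i hij', mul_assoc]
  have H3 : a * b * a = -(a * a * b) := h3 i j hij
  have H3' : b * a * b = -(b * b * a) := h3 j i hij'
  have e1 : a * b * (a * b) = -(a * a * (b * b)) := by
    rw [← mul_assoc, H3, neg_mul, mul_assoc]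
  have e2 : a * b * (b * a) = a * a * (b * b) := by
    rw [mul_assoc a b (b * a), ← mul_assoc b b a, H2', ← mul_assoc]
  have e3 : b * a * (a * b) = a * a * (b * b) := by
    rw [mul_assoc b a (a * b), ← mul_assoc a a b, H2, ← mul_assoc,
      ← mul_assoc, H2', mul_assoc a (b * b) a, H2', ← mul_assoc]
  have e4 : b * a * (b * a) = -(a * a * (b * b)) := by
    rw [← mul_assoc, H3', neg_mul, H2', mul_assoc a (b * b) a, H2', ← mul_assoc]
  have hc2 : c * c = 0 := by
    rw [hc, add_mul, mul_add, mul_add, e1, e2, e3, e4]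
    abel
  have hnorm : ‖c‖ = 0 := by
    have := CStarRing.norm_star_mul_self (x := c)
    rw [hcs, hc2, norm_zero] at this
    nlinarith [norm_nonneg c]
  have hc0 : c = 0 := norm_eq_zero.mp hnorm
  have : a * b + b * a = 0 := by rw [← hc, hc0]
  exact eq_neg_of_add_eq_zero_left this
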